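/- For every α ∈ [0,1] there exists a partition μ (i.e. a sequence μ_n with 0 ≤ μ_n < n for n ≥ 2) such that the partial counts B_n = Σ_{2≤j≤n} μ_j satisfy lim_{n→∞} 2 B_n / (n(n-1)) = α. Consequently the Hausdorff spectrum of the pro-p group G of infinite upper unitriangular matrices over F_q is the whole interval [0,1], realized by partition subgroups. -/

import Mathlib

open Filter

/-- For every `α ∈ [0,1]` there is a partition `μ` (a sequence with `μ_n < n` for `n ≥ 2`)
whose partial counts `B_n = Σ_{2≤j≤n} μ_j` satisfy `2B_n/(n(n-1)) → α`; since
`2B_n/(n(n-1)) = log_q|P_μ N_n/N_n| / log_q|G_n|`, this realizes every `α ∈ [0,1]` as the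
Hausdorff dimension of a partition subgroup, so the Hausdorff spectrum of `G` is `[0,1]`. -/
theorem hausdorff_spectrum_partition (α : ℝ) (hα : α ∈ Set.Icc (0 : ℝ) 1) :
    ∃ μ : ℕ → ℕ, (∀ n, 2 ≤ n → μ n < n) ∧
      Tendsto (fun n : ℕ =>
          2 * ((∑ j ∈ Finset.Icc 2 n, μ j : ℕ) : ℝ) / ((n : ℝ) * ((n : ℝ) - 1)))
        atTop (nhds α) := by
  obtain ⟨hα0, hα1⟩ := hα
  set f : ℕ → ℝ := fun n => α * ((n : ℝ) * ((n : ℝ) - 1)) / 2 with hf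
  set b : ℕ → ℕ := fun n => ⌊f n⌋₊ with hb
  have hf0 : ∀ n : ℕ, 0 ≤ f n := by
    intro n
    rcases Nat.eq_zero_or_pos n with h | h
    · simp [hf, h]
    · have h1 : (1 : ℝ) ≤ (n : ℝ) := by exact_mod_cast h
      have : (0:ℝ) ≤ (n : ℝ) * ((n : ℝ) - 1) := by nlinarith
      rw [hf]; positivity
  have hfmono : Monotone f := by
    intro m n hmn
    have hc : (m : ℝ) ≤ (n : ℝ) := by exact_mod_cast hmn
    have hm0 : (0:ℝ) ≤ (m : ℝ) := Nat.cast_nonneg m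
    simp only [hf]
    have : (m : ℝ) * ((m : ℝ) - 1) ≤ (n : ℝ) * ((n : ℝ) - 1) := by
      rcases Nat.eq_zero_or_pos m with h | h
      · subst h
        rcases Nat.eq_zero_or_pos n with h' | h'
        · subst h'; simp
        · have : (1:ℝ) ≤ (n:ℝ) := by exact_mod_cast h'
          simp; nlinarith
      · have : (1:ℝ) ≤ (m:ℝ) := by exact_mod_cast h
        nlinarith
    nlinarith
  have hbmono : Monotone b := fun m n h => Nat.floor_le_floor (hfmono h)
  refine ⟨fun n => b n - b (n - 1), ?_, ?_⟩
  · intro n hn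
    have key : b n < b (n - 1) + n := by
      rw [hb]
      rw [Nat.floor_lt (hf0 n)]
      have hcast : ((n - 1 : ℕ) : ℝ) = (n : ℝ) - 1 := by
        have : 1 ≤ n := by omega
        push_cast [this]; ring
      have hcast2 : ((n - 1 : ℕ) : ℝ) - 1 = (n : ℝ) - 2 := by rw [hcast]; ring
      have hdiff : f n - f (n - 1) = α * ((n : ℝ) - 1) := by
        simp only [hf, hcast, hcast2]; ring
      have hlt : f (n - 1) < (b (n - 1) : ℝ) + 1 := Nat.lt_floor_add_one _
      have hn1 : (0:ℝ) ≤ (n : ℝ) - 1 := by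
        have : (1:ℝ) ≤ (n:ℝ) := by exact_mod_cast (by omega : 1 ≤ n)
        linarith
      have : α * ((n : ℝ) - 1) ≤ (n : ℝ) - 1 := by nlinarith
      push_cast
      linarith
    show b n - b (n - 1) < n
    omega
  · have hsum : ∀ n : ℕ, 1 ≤ n → (∑ j ∈ Finset.Icc 2 n, (b j - b (j - 1))) = b n := by
      intro n hn
      induction n, hn using Nat.le_induction with
      | base => simp [hb, hf]
      | succ n hn ih =>
        rw [Finset.sum_Icc_succ_top (by omega : 2 ≤ n + 1), ih]
        have h1 : b n ≤ b (n + 1) := hbmono (by omega)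
        simp only [Nat.add_sub_cancel]
        omega
    have htend : Tendsto (fun n : ℕ => 2 * ((b n : ℝ)) / ((n : ℝ) * ((n : ℝ) - 1)))
        atTop (nhds α) := by
      have hD : Tendsto (fun n : ℕ => (n : ℝ) * ((n : ℝ) - 1)) atTop atTop := by
        apply Tendsto.atTop_mul_atTop₀ tendsto_natCast_atTop_atTop
        exact tendsto_atTop_add_const_right atTop (-1) tendsto_natCast_atTop_atTop
      have hinv : Tendsto (fun n : ℕ => 2 / ((n : ℝ) * ((n : ℝ) - 1))) atTop (nhds 0) :=
        Tendsto.div_atTop tendsto_const_nhds hD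
      have hlow : Tendsto (fun n : ℕ => α - 2 / ((n : ℝ) * ((n : ℝ) - 1))) atTop (nhds α) := by
        have := (tendsto_const_nhds (x := α) (f := atTop (α := ℕ))).sub hinv
        simpa using this
      apply tendsto_of_tendsto_of_tendsto_of_le_of_le' hlow tendsto_const_nhds
      · filter_upwards [eventually_ge_atTop 2] with n hn
        have hD0 : (0:ℝ) < (n : ℝ) * ((n : ℝ) - 1) := by
          have : (2:ℝ) ≤ (n:ℝ) := by exact_mod_cast hn
          nlinarith
        rw [sub_le_iff_le_add, ← add_div, le_div_iff₀ hD0]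
        have hlt : f n < (b n : ℝ) + 1 := Nat.lt_floor_add_one _
        simp only [hf] at hlt
        nlinarith
      · filter_upwards [eventually_ge_atTop 2] with n hn
        have hD0 : (0:ℝ) < (n : ℝ) * ((n : ℝ) - 1) := by
          have : (2:ℝ) ≤ (n:ℝ) := by exact_mod_cast hn
          nlinarith
        rw [div_le_iff₀ hD0]
        have hle : (b n : ℝ) ≤ f n := Nat.floor_le (hf0 n)
        simp only [hf] at hle
        linarith
    apply htend.congr'
    filter_upwards [eventually_ge_atTop 1] with n hn
    rw [hsum n hn]
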